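/- Let X, Y be normed linear spaces and T a bounded linear operator whose norm attainment set is M_T = {x₀, −x₀} for a unit vector x₀, and which satisfies: for every δ > 0, if {H_α} is the collection of all hyperplanes through the origin (kernels of nonzero bounded linear functionals) with d(x₀, H_α) > δ, then sup{‖Tx‖ : x a unit vector in some H_α} < ‖T‖. Then for any bounded operator A, T ⊥_B A if and only if Tx₀ ⊥_B Ax₀. -/

import Mathlib

open Submodule

lemma exists_unit_gt' {X Y : Type*} [NormedAddCommGroup X] [NormedSpace ℝ X]
    [NormedAddCommGroup Y] [NormedSpace ℝ Y]
    (S : X →L[ℝ] Y) (x₀ : X) (hx₀ : ‖x₀‖ = 1) {ε : ℝ} (hε : 0 < ε) :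
    ∃ x : X, ‖x‖ = 1 ∧ ‖S‖ - ε < ‖S x‖ := by
  by_cases h0 : ‖S‖ = 0
  · exact ⟨x₀, hx₀, by rw [h0]; have := norm_nonneg (S x₀); linarith⟩
  have hS : 0 < ‖S‖ := lt_of_le_of_ne (norm_nonneg S) (Ne.symm h0)
  have hmin1 : min ε ‖S‖ ≤ ε := min_le_left _ _
  have hmin2 : min ε ‖S‖ ≤ ‖S‖ := min_le_right _ _
  have hminpos : 0 < min ε ‖S‖ := lt_min hε hS
  set c : ℝ := ‖S‖ - min ε ‖S‖ / 2 with hc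
  have hcpos : 0 < c := by simp only [hc]; linarith
  have hclt : c < ‖S‖ := by simp only [hc]; linarith
  have : ¬ ∀ x : X, ‖S x‖ ≤ c * ‖x‖ := by
    intro h
    exact absurd (S.opNorm_le_bound hcpos.le h) (not_le.mpr hclt)
  push_neg at this
  obtain ⟨x, hx⟩ := this
  have hxne : x ≠ 0 := by
    rintro rfl
    rw [map_zero, norm_zero, norm_zero, mul_zero] at hx
    exact lt_irrefl 0 hx
  have hxpos : 0 < ‖x‖ := norm_pos_iff.mpr hxne
  refine ⟨‖x‖⁻¹ • x, ?_, ?_⟩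
  · rw [norm_smul, norm_inv, norm_norm, inv_mul_cancel₀ hxpos.ne']
  · have h1 : ‖S (‖x‖⁻¹ • x)‖ = ‖x‖⁻¹ * ‖S x‖ := by
      rw [map_smul, norm_smul, norm_inv, norm_norm]
    have h2 : c < ‖x‖⁻¹ * ‖S x‖ := by
      calc c = ‖x‖⁻¹ * (c * ‖x‖) := by field_simp
        _ < ‖x‖⁻¹ * ‖S x‖ := mul_lt_mul_of_pos_left hx (inv_pos.mpr hxpos)
    rw [h1]
    have h3 : ‖S‖ - ε ≤ c := by simp only [hc]; linarith
    linarith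

-- distance from x₀ to the line through x
lemma line_dist'' {X : Type*} [NormedAddCommGroup X] [NormedSpace ℝ X]
    {x x₀ : X} (hx : ‖x‖ = 1) (hx₀ : ‖x₀‖ = 1) {ρ : ℝ}
    (h1 : ρ ≤ ‖x - x₀‖) (h2 : ρ ≤ ‖x + x₀‖) (t : ℝ) :
    ρ / 2 ≤ ‖x₀ - t • x‖ := by
  set η := ‖x₀ - t • x‖ with hη
  have hb : |(|t| - 1)| ≤ η := by
    have := abs_norm_sub_norm_le (t • x) x₀
    rw [norm_smul, Real.norm_eq_abs, hx, mul_one, hx₀, ← norm_neg (t • x - x₀)] at this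
    simpa [hη, neg_sub] using this
  rcases le_or_gt 0 t with ht | ht
  · have key : ‖x₀ - x‖ ≤ η + |t - 1| := by
      calc ‖x₀ - x‖ = ‖(x₀ - t • x) + (t - 1) • x‖ := by
            congr 1; rw [sub_smul, one_smul]; abel
        _ ≤ η + ‖(t - 1) • x‖ := norm_add_le _ _
        _ = η + |t - 1| := by rw [norm_smul, Real.norm_eq_abs, hx, mul_one]
    have habs : |t - 1| = |(|t| - 1)| := by rw [abs_of_nonneg ht]
    have hρ1 : ρ ≤ ‖x₀ - x‖ := by rw [← norm_neg, neg_sub]; exact h1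
    rw [habs] at key
    linarith
  · have key : ‖x₀ + x‖ ≤ η + |t + 1| := by
      calc ‖x₀ + x‖ = ‖(x₀ - t • x) + (t + 1) • x‖ := by
            congr 1; rw [add_smul, one_smul]; abel
        _ ≤ η + ‖(t + 1) • x‖ := norm_add_le _ _
        _ = η + |t + 1| := by rw [norm_smul, Real.norm_eq_abs, hx, mul_one]
    have habs : |t + 1| = |(|t| - 1)| := by
      rw [abs_of_neg ht]
      have : -t - 1 = -(t + 1) := by ring
      rw [this, abs_neg]
    have hρ1 : ρ ≤ ‖x₀ + x‖ := by rw [add_comm]; exact h2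
    rw [habs] at key
    linarith

lemma exists_hyperplane' {X : Type*} [NormedAddCommGroup X] [NormedSpace ℝ X]
    {x x₀ : X} (hx : ‖x‖ = 1) (hx₀ : ‖x₀‖ = 1) {ρ : ℝ} (hρ : 0 < ρ)
    (h1 : ρ ≤ ‖x - x₀‖) (h2 : ρ ≤ ‖x + x₀‖) :
    ∃ f : X →L[ℝ] ℝ, f ≠ 0 ∧ f x = 0 ∧ ρ / 4 < Metric.infDist x₀ {h : X | f h = 0} := by
  set S : Submodule ℝ X := ℝ ∙ x with hS
  haveI : IsClosed (S : Set X) := S.closed_of_finiteDimensional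
  -- the quotient map as a continuous linear map
  let π : X →L[ℝ] (X ⧸ S) := S.mkQ.mkContinuous 1 (fun m => by
    simpa using Submodule.Quotient.norm_mk_le (S := S) m)
  have hπ : ∀ m : X, π m = Submodule.Quotient.mk m := fun m => rfl
  -- lower bound on representatives of the class of x₀
  have hrep : ∀ m : X, (Submodule.Quotient.mk m : X ⧸ S) = Submodule.Quotient.mk x₀ →
      ρ / 2 ≤ ‖m‖ := by
    intro m hm
    have hmem : m - x₀ ∈ S := (Submodule.Quotient.eq S).mp hm
    obtain ⟨t, ht⟩ := Submodule.mem_span_singleton.mp hmem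
    have hm' : m = x₀ - (-t) • x := by
      rw [neg_smul, sub_neg_eq_add, ht]; abel
    rw [hm']
    exact line_dist'' hx hx₀ h1 h2 (-t)
  have hnorm : ρ / 2 ≤ ‖(Submodule.Quotient.mk x₀ : X ⧸ S)‖ := by
    by_contra hlt
    push_neg at hlt
    obtain ⟨m, hm, hml⟩ := Submodule.Quotient.norm_mk_lt
      (Submodule.Quotient.mk x₀ : X ⧸ S) (sub_pos.mpr hlt)
    have := hrep m hm
    linarith
  have hne : (Submodule.Quotient.mk x₀ : X ⧸ S) ≠ 0 := by
    intro h
    rw [h, norm_zero] at hnorm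
    linarith
  obtain ⟨g, hg1, hg2⟩ := exists_dual_vector ℝ (Submodule.Quotient.mk x₀ : X ⧸ S) (norm_ne_zero_iff.mpr hne)
  refine ⟨g.comp π, ?_, ?_, ?_⟩
  · intro h
    have hfx₀ : g (π x₀) = ‖(Submodule.Quotient.mk x₀ : X ⧸ S)‖ := by
      rw [hπ]; exact_mod_cast hg2
    have hz : g (π x₀) = 0 := by
      have : (g.comp π) x₀ = (0 : X →L[ℝ] ℝ) x₀ := by rw [h]
      simpa using this
    rw [hz] at hfx₀
    linarith
  · show g (π x) = 0
    have : π x = 0 := by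
      rw [hπ, Submodule.Quotient.mk_eq_zero]
      exact Submodule.mem_span_singleton_self x
    rw [this, map_zero]
  · have hfx₀ : g (π x₀) = ‖(Submodule.Quotient.mk x₀ : X ⧸ S)‖ := by
      rw [hπ]; exact_mod_cast hg2
    have hlow : ρ / 2 ≤ Metric.infDist x₀ {h : X | (g.comp π) h = 0} := by
      by_contra hcon
      push_neg at hcon
      obtain ⟨h, hh, hdist⟩ := (Metric.infDist_lt_iff ⟨0, by simp⟩).mp hcon
      simp only [Set.mem_setOf_eq, ContinuousLinearMap.comp_apply] at hh
      have key : ‖(Submodule.Quotient.mk x₀ : X ⧸ S)‖ ≤ ‖π x₀ - π h‖ := by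
          have := g.le_opNorm (π x₀ - π h)
          rw [hg1, one_mul] at this
          calc ‖(Submodule.Quotient.mk x₀ : X ⧸ S)‖ = |g (π x₀) - g (π h)| := by
                rw [hfx₀, hh, sub_zero]
                exact (abs_of_nonneg (norm_nonneg _)).symm
            _ = ‖g (π x₀ - π h)‖ := by rw [map_sub]; rfl
            _ ≤ ‖π x₀ - π h‖ := this
      have key2 : ‖π x₀ - π h‖ ≤ ‖x₀ - h‖ := by
        rw [← map_sub]
        simpa [hπ] using Submodule.Quotient.norm_mk_le (S := S) (x₀ - h)
      rw [dist_eq_norm] at hdist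
      linarith
    linarith

set_option maxHeartbeats 2000000 in
theorem stmt_13 {X Y : Type*} [NormedAddCommGroup X] [NormedSpace ℝ X]
    [NormedAddCommGroup Y] [NormedSpace ℝ Y]
    (T : X →L[ℝ] Y) (x₀ : X) (hx₀ : ‖x₀‖ = 1)
    (hMT : ∀ x : X, ‖x‖ = 1 → (‖T x‖ = ‖T‖ ↔ x = x₀ ∨ x = -x₀))
    (hhyp : ∀ δ : ℝ, 0 < δ → ∃ m : ℝ, m < ‖T‖ ∧ ∀ x : X, ‖x‖ = 1 →
      (∃ f : X →L[ℝ] ℝ, f ≠ 0 ∧ f x = 0 ∧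
        δ < Metric.infDist x₀ {h : X | f h = 0}) → ‖T x‖ ≤ m)
    (A : X →L[ℝ] Y) :
    (∀ l : ℝ, ‖T‖ ≤ ‖T + l • A‖) ↔ (∀ l : ℝ, ‖T x₀‖ ≤ ‖T x₀ + l • A x₀‖) := by
  have hT0 : ‖T x₀‖ = ‖T‖ := (hMT x₀ hx₀).mpr (Or.inl rfl)
  constructor
  · intro hT l
    rw [hT0]
    refine le_of_forall_pos_le_add ?_
    intro ε hε
    obtain ⟨K, hK⟩ : ∃ K : ℝ, K = ‖T‖ + |l| * ‖A‖ := ⟨_, rfl⟩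
    have hK0 : 0 ≤ K := by rw [hK]; positivity
    obtain ⟨ρ, hρdef⟩ : ∃ ρ : ℝ, ρ = ε / (2 * (K + 1)) := ⟨_, rfl⟩
    have hρ : 0 < ρ := by rw [hρdef]; exact div_pos hε (by linarith)
    have hρK : ρ * K ≤ ε / 2 := by
      have he : ρ * (K + 1) = ε / 2 := by rw [hρdef]; field_simp
      nlinarith [hρ]
    obtain ⟨m, hm, hmbound⟩ := hhyp (ρ / 4) (by linarith)
    have hc : 0 < (‖T‖ - m) / (2 * (1 + |l| * ‖A‖)) := by
      apply div_pos (by linarith)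
      positivity
    obtain ⟨t, htdef⟩ : ∃ t : ℝ, t = min 1 (min (ε / 2) ((‖T‖ - m) / (2 * (1 + |l| * ‖A‖)))) := ⟨_, rfl⟩
    have htpos : 0 < t := htdef ▸ lt_min one_pos (lt_min (by linarith) hc)
    have ht1 : t ≤ 1 := htdef ▸ min_le_left _ _
    have htε : t ≤ ε / 2 := htdef ▸ le_trans (min_le_right _ _) (min_le_left _ _)
    have htm : t ≤ (‖T‖ - m) / (2 * (1 + |l| * ‖A‖)) :=
      htdef ▸ le_trans (min_le_right _ _) (min_le_right _ _)
    obtain ⟨x, hx1, hx2⟩ := exists_unit_gt' (T + (t * l) • A) x₀ hx₀ (mul_pos htpos htpos)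
    have happ : (T + (t * l) • A) x = T x + (t * l) • A x := rfl
    have hxval : ‖T‖ - t * t < ‖T x + (t * l) • A x‖ := by
      have h := hT (t * l)
      rw [happ] at hx2
      linarith
    have hTx_le : ‖T x‖ ≤ ‖T‖ := by
      have := T.le_opNorm x
      rwa [hx1, mul_one] at this
    -- convexity step
    have hid : T x + (t * l) • A x = (1 - t) • (T x) + t • (T x + l • A x) := by
      rw [smul_add, sub_smul, one_smul, smul_smul]
      abel
    have h6 : ‖T x + (t * l) • A x‖ ≤ (1 - t) * ‖T x‖ + t * ‖T x + l • A x‖ := by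
      rw [hid]
      refine le_trans (norm_add_le _ _) ?_
      rw [norm_smul, norm_smul, Real.norm_eq_abs, Real.norm_eq_abs,
        abs_of_nonneg htpos.le, abs_of_nonneg (by linarith : (0:ℝ) ≤ 1 - t)]
    have hprod : 0 ≤ (1 - t) * (‖T‖ - ‖T x‖) :=
      mul_nonneg (by linarith) (by linarith)
    have h7 : t * (‖T‖ - t) ≤ t * ‖T x + l • A x‖ := by nlinarith
    have hconv : ‖T‖ - t ≤ ‖T x + l • A x‖ := le_of_mul_le_mul_left h7 htpos
    -- lower bound on ‖T x‖
    have h8 : ‖(t * l) • A x‖ ≤ t * (|l| * ‖A‖) := by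
      rw [norm_smul, Real.norm_eq_abs, abs_mul, abs_of_nonneg htpos.le, mul_assoc]
      refine mul_le_mul_of_nonneg_left ?_ htpos.le
      have := A.le_opNorm x
      rw [hx1, mul_one] at this
      exact mul_le_mul_of_nonneg_left this (abs_nonneg l)
    have hTx_ge : ‖T‖ - t * t - t * (|l| * ‖A‖) < ‖T x‖ := by
      have h9 : ‖T x + (t * l) • A x‖ ≤ ‖T x‖ + ‖(t * l) • A x‖ := norm_add_le _ _
      linarith
    -- generic "near" estimate
    have hKnorm : ‖T + l • A‖ ≤ K := by
      rw [hK]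
      refine le_trans (norm_add_le _ _) ?_
      have : ‖l • A‖ ≤ |l| * ‖A‖ := by
        rw [← Real.norm_eq_abs]
        exact norm_smul_le l A
      linarith
    have hgen : ∀ z : X, ‖x - z‖ < ρ → ‖T‖ - t - ρ * K ≤ ‖T z + l • A z‖ := by
      intro z hz
      have e : (T + l • A) (x - z) = (T x + l • A x) - (T z + l • A z) := by
        simp only [ContinuousLinearMap.add_apply, ContinuousLinearMap.coe_smul',
          Pi.smul_apply, map_sub, smul_sub]
      have hdiff : ‖(T x + l • A x) - (T z + l • A z)‖ ≤ ρ * K := by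
        rw [← e]
        refine le_trans ((T + l • A).le_opNorm _) ?_
        rw [mul_comm ρ K]
        exact mul_le_mul hKnorm hz.le (norm_nonneg _) hK0
      have := norm_sub_norm_le (T x + l • A x) (T z + l • A z)
      linarith
    rcases lt_or_ge ‖x - x₀‖ ρ with hnear | hfar1
    · have hfin := hgen x₀ hnear
      calc ‖T‖ ≤ ‖T x₀ + l • A x₀‖ + (t + ρ * K) := by linarith
        _ ≤ ‖T x₀ + l • A x₀‖ + ε := by linarith
    · rcases lt_or_ge ‖x + x₀‖ ρ with hnear | hfar2
      · have hz : ‖x - (-x₀)‖ < ρ := by rwa [sub_neg_eq_add]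
        have hb := hgen (-x₀) hz
        have e2 : T (-x₀) + l • A (-x₀) = -(T x₀ + l • A x₀) := by
          rw [map_neg, map_neg, smul_neg, neg_add]
        rw [e2, norm_neg] at hb
        linarith
      · exfalso
        obtain ⟨f, hf0, hfx, hfd⟩ := exists_hyperplane' hx1 hx₀ hρ hfar1 hfar2
        have hmb : ‖T x‖ ≤ m := hmbound x hx1 ⟨f, hf0, hfx, hfd⟩
        have h4 : t + t * (|l| * ‖A‖) ≤ (‖T‖ - m) / 2 := by
          have e : t + t * (|l| * ‖A‖) = t * (1 + |l| * ‖A‖) := by ring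
          rw [e]
          calc t * (1 + |l| * ‖A‖)
              ≤ ((‖T‖ - m) / (2 * (1 + |l| * ‖A‖))) * (1 + |l| * ‖A‖) :=
                mul_le_mul_of_nonneg_right htm (by positivity)
            _ = (‖T‖ - m) / 2 := by field_simp
        have h5 : t * t ≤ t := by nlinarith
        linarith
  · intro hx l
    calc ‖T‖ = ‖T x₀‖ := hT0.symm
      _ ≤ ‖T x₀ + l • A x₀‖ := hx l
      _ = ‖(T + l • A) x₀‖ := by
          simp only [ContinuousLinearMap.add_apply, ContinuousLinearMap.coe_smul',
            Pi.smul_apply]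
      _ ≤ ‖T + l • A‖ * ‖x₀‖ := (T + l • A).le_opNorm x₀
      _ = ‖T + l • A‖ := by rw [hx₀, mul_one]
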